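/- If u is a nonprincipal ultrafilter on FIN, then player II does not have a winning strategy in the game G(u), in which at inning n player I plays a set Aₙ ∈ u, player II responds with xₙ ∈ Aₙ, and player II wins iff FU({xₙ | n < ω}) ∈ u. -/

import Mathlib

open Set

def FIN : Set (Finset ℕ) := {s | s.Nonempty}

/-- FU(X): all unions of nonempty finite subfamilies of X. -/
def FU (X : Set (Finset ℕ)) : Set (Finset ℕ) :=
  {s | ∃ F : Finset (Finset ℕ), F.Nonempty ∧ ↑F ⊆ X ∧ s = F.sup id}

/-- min of a (nonempty) finite set of naturals. -/
noncomputable def mn (s : Finset ℕ) : ℕ := sInf ↑s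
/-- max of a finite set of naturals. -/
def mx (s : Finset ℕ) : ℕ := s.sup id

def MinUnbSet (A : Set (Finset ℕ)) : Prop := ∀ n : ℕ, ∃ x ∈ A, n < mn x

/-- −x + A = { y ∈ FIN | max x < min y ∧ x ∪ y ∈ A }. -/
def negAdd (x : Finset ℕ) (A : Set (Finset ℕ)) : Set (Finset ℕ) :=
  {y | y ∈ FIN ∧ mx x < mn y ∧ x ∪ y ∈ A}

/-- A ∈ u + v iff { x | −x + A ∈ v } ∈ u. -/
def sumMem (u v : Ultrafilter (Finset ℕ)) (A : Set (Finset ℕ)) : Prop :=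
  {x | negAdd x A ∈ v} ∈ u

/-- a min-unbounded ultrafilter on FIN. -/
def MinUnbUlt (u : Ultrafilter (Finset ℕ)) : Prop :=
  FIN ∈ u ∧ ∀ A ∈ u, MinUnbSet A

/-- an infinite pairwise disjoint family of nonempty finite sets. -/
def PDisjFam (X : Set (Finset ℕ)) : Prop :=
  X ⊆ FIN ∧ X.Infinite ∧ X.PairwiseDisjoint id

/-- a block family: any two distinct members are separated. -/
def IsBlockFam (X : Set (Finset ℕ)) : Prop :=
  X ⊆ FIN ∧ ∀ x ∈ X, ∀ y ∈ X, x ≠ y → mx x < mn y ∨ mx y < mn x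

/-- a block sequence indexed by ℕ. -/
def IsBlockSeq (x : ℕ → Finset ℕ) : Prop :=
  (∀ n, (x n).Nonempty) ∧ ∀ n, mx (x n) < mn (x (n + 1))

/-- A* = { x ∈ A | −x + A ∈ u }. -/
def ustar (u : Ultrafilter (Finset ℕ)) (A : Set (Finset ℕ)) : Set (Finset ℕ) :=
  {x | x ∈ A ∧ negAdd x A ∈ u}

/-- a union ultrafilter on FIN. -/
def UnionUlt (u : Ultrafilter (Finset ℕ)) : Prop :=
  FIN ∈ u ∧ ∀ A ∈ u, ∃ X, PDisjFam X ∧ FU X ∈ u ∧ FU X ⊆ A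

/-- almost condensation: X ≤ Y iff X \ F ⊆ FU Y for some finite F. -/
def ACond (X Y : Set (Finset ℕ)) : Prop :=
  ∃ F : Set (Finset ℕ), F.Finite ∧ X \ F ⊆ FU Y


/-! Auxiliary machinery for `stmt18`: we run two plays against a purported
winning strategy `σ`, forcing the maxima of the responses to strictly
interleave, so the two resulting FU-sets are disjoint. -/

/-- the (cofinite, hence ultrafilter-large) set of finsets with max above `k`. -/
def DD18 (k : ℕ) : Set (Finset ℕ) := {s | k < mx s}

/-- the interleaved bounds for player I's moves in the first play. -/
noncomputable def bb18 (σ : List (Set (Finset ℕ)) → Finset ℕ) : ℕ → ℕ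
  | 0 => 0
  | n+1 => mx (σ ((List.range (n+1)).map (fun i =>
      DD18 (mx (σ ((List.range (i+1)).map (fun j => DD18 (bb18 σ (min j n)))))))))
  decreasing_by omega

noncomputable def Bm18 (σ : List (Set (Finset ℕ)) → Finset ℕ) (n : ℕ) : Set (Finset ℕ) :=
  DD18 (bb18 σ n)
noncomputable def xx18 (σ : List (Set (Finset ℕ)) → Finset ℕ) (n : ℕ) : Finset ℕ :=
  σ ((List.range (n+1)).map (Bm18 σ))
noncomputable def cc18 (σ : List (Set (Finset ℕ)) → Finset ℕ) (n : ℕ) : ℕ := mx (xx18 σ n)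
noncomputable def Cm18 (σ : List (Set (Finset ℕ)) → Finset ℕ) (n : ℕ) : Set (Finset ℕ) :=
  DD18 (cc18 σ n)
noncomputable def yy18 (σ : List (Set (Finset ℕ)) → Finset ℕ) (n : ℕ) : Finset ℕ :=
  σ ((List.range (n+1)).map (Cm18 σ))

lemma bb18_succ (σ : List (Set (Finset ℕ)) → Finset ℕ) (n : ℕ) :
    bb18 σ (n+1) = mx (yy18 σ n) := by
  rw [bb18, yy18]
  congr 2
  apply List.map_congr_left
  intro i hi
  simp only [List.mem_range] at hi
  have h : (List.range (i+1)).map (fun j => DD18 (bb18 σ (min j n)))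
      = (List.range (i+1)).map (Bm18 σ) := by
    apply List.map_congr_left
    intro j hj
    simp only [List.mem_range] at hj
    rw [Bm18]
    have : min j n = j := by omega
    rw [this]
  rw [Cm18, cc18, xx18, h]

lemma DD18_mem (u : Ultrafilter (Finset ℕ)) (hnp : ∀ A : Set (Finset ℕ), A.Finite → A ∉ u)
    (k : ℕ) : DD18 k ∈ u := by
  by_contra h
  have hc : (DD18 k)ᶜ ∈ u := Ultrafilter.compl_mem_iff_notMem.2 h
  refine hnp _ ?_ hc
  apply Set.Finite.subset (Finset.finite_toSet (Finset.range (k+1)).powerset)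
  intro s hs
  simp only [DD18, Set.mem_compl_iff, Set.mem_setOf_eq, not_lt, mx] at hs
  simp only [Finset.coe_powerset, Set.mem_preimage, Set.mem_powerset_iff, Finset.coe_subset,
    Finset.mem_coe, Finset.mem_powerset]
  intro a ha
  have := Finset.le_sup (f := id) ha
  simp only [id] at this
  simp only [Finset.mem_range]
  omega

lemma sup_sup_eq18 (F : Finset (Finset ℕ)) : (F.sup id).sup id = F.sup mx := by
  classical
  induction F using Finset.induction_on with
  | empty => simp [mx]
  | insert _ _ h ih => simp [Finset.sup_union, ih, mx]

lemma mx_of_mem_FU18 {X : Set (Finset ℕ)} {s : Finset ℕ} (hs : s ∈ FU X) :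
    ∃ t ∈ X, mx s = mx t := by
  obtain ⟨F, hne, hsub, rfl⟩ := hs
  obtain ⟨t, ht, hts⟩ := Finset.exists_mem_eq_sup F hne mx
  exact ⟨t, hsub ht, by rw [mx, sup_sup_eq18, hts]⟩

theorem stmt18 (u : Ultrafilter (Finset ℕ))
    (hnp : ∀ A : Set (Finset ℕ), A.Finite → A ∉ u) :
    ¬ ∃ σ : List (Set (Finset ℕ)) → Finset ℕ,
      (∀ (l : List (Set (Finset ℕ))) (A : Set (Finset ℕ)),
        (∀ B ∈ l, B ∈ u) → A ∈ u → σ (l ++ [A]) ∈ A) ∧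
      (∀ A : ℕ → Set (Finset ℕ), (∀ n, A n ∈ u) →
        FU (Set.range fun n => σ ((List.range (n + 1)).map A)) ∈ u) := by
  rintro ⟨σ, h1, h2⟩
  -- all the sets played in both plays belong to u
  have hBu : ∀ n, Bm18 σ n ∈ u := fun n => DD18_mem u hnp _
  have hCu : ∀ n, Cm18 σ n ∈ u := fun n => DD18_mem u hnp _
  -- legality of the responses
  have hx : ∀ n, xx18 σ n ∈ Bm18 σ n := by
    intro n
    have : (List.range (n+1)).map (Bm18 σ) = ((List.range n).map (Bm18 σ)) ++ [Bm18 σ n] := by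
      rw [List.range_succ, List.map_append]; rfl
    rw [xx18, this]
    apply h1
    · intro B hB
      simp only [List.mem_map, List.mem_range] at hB
      obtain ⟨j, _, rfl⟩ := hB
      exact hBu j
    · exact hBu n
  have hy : ∀ n, yy18 σ n ∈ Cm18 σ n := by
    intro n
    have : (List.range (n+1)).map (Cm18 σ) = ((List.range n).map (Cm18 σ)) ++ [Cm18 σ n] := by
      rw [List.range_succ, List.map_append]; rfl
    rw [yy18, this]
    apply h1
    · intro B hB
      simp only [List.mem_map, List.mem_range] at hB
      obtain ⟨j, _, rfl⟩ := hB
      exact hCu j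
    · exact hCu n
  -- the strict interleaving of the maxima
  have hbc : ∀ n, bb18 σ n < cc18 σ n := fun n => hx n
  have hcb : ∀ n, cc18 σ n < bb18 σ (n+1) := by
    intro n
    have := hy n
    rw [Cm18, DD18] at this
    rw [bb18_succ]
    exact this
  have hbmono : StrictMono (bb18 σ) :=
    strictMono_nat_of_lt_succ (fun n => lt_trans (hbc n) (hcb n))
  have hcmono : StrictMono (cc18 σ) :=
    strictMono_nat_of_lt_succ (fun n => lt_trans (hcb n) (hbc (n+1)))
  have hne : ∀ n m, cc18 σ n ≠ bb18 σ (m+1) := by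
    intro n m h
    rcases le_or_gt n m with hnm | hnm
    · have : cc18 σ n ≤ cc18 σ m := hcmono.monotone hnm
      have := hcb m
      omega
    · have : bb18 σ (m+1) ≤ bb18 σ n := hbmono.monotone hnm
      have := hbc n
      omega
  -- both FU-sets are in u
  have hXu : FU (Set.range (xx18 σ)) ∈ u := h2 (Bm18 σ) hBu
  have hYu : FU (Set.range (yy18 σ)) ∈ u := h2 (Cm18 σ) hCu
  -- but they are disjoint
  have hdisj : FU (Set.range (xx18 σ)) ∩ FU (Set.range (yy18 σ)) = ∅ := by
    ext s
    simp only [Set.mem_inter_iff, Set.mem_empty_iff_false, iff_false, not_and]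
    intro hsX hsY
    obtain ⟨t, ht, hts⟩ := mx_of_mem_FU18 hsX
    obtain ⟨t', ht', hts'⟩ := mx_of_mem_FU18 hsY
    obtain ⟨n, rfl⟩ := ht
    obtain ⟨m, rfl⟩ := ht'
    have : cc18 σ n = mx (yy18 σ m) := by rw [cc18, ← hts, hts']
    rw [← bb18_succ] at this
    exact hne n m this
  have : (∅ : Set (Finset ℕ)) ∈ u := by
    rw [← hdisj]
    exact Filter.inter_mem hXu hYu
  exact hnp ∅ Set.finite_empty this
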